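/- For any FDLTI plant $P$ and any sparsity pattern $\mathcal{S}$, the fixed modes with respect to static controllers equal the fixed modes with respect to finite-order dynamic LTI controllers: $\mathrm{FM}(P,\mathcal{S},\mathcal{T}^s) = \mathrm{FM}(P,\mathcal{S},\mathcal{T}^d)$. -/

import Mathlib

open Matrix

/-- Closed-loop dynamics matrix for a static controller `DK`. -/
noncomputable def AclS {n p q : Type*}
    [Fintype n] [DecidableEq n] [Fintype p] [DecidableEq p] [Fintype q] [DecidableEq q]
    (AP : Matrix n n ℂ) (BP : Matrix n p ℂ) (CP : Matrix q n ℂ) (DP : Matrix q p ℂ)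
    (DK : Matrix p q ℂ) : Matrix n n ℂ :=
  AP + BP * (1 - DK * DP)⁻¹ * DK * CP

/-- Closed-loop dynamics matrix for a dynamic controller `(AK, BK, CK, DK)`. -/
noncomputable def AclD {n k p q : Type*}
    [Fintype n] [DecidableEq n] [Fintype k] [DecidableEq k]
    [Fintype p] [DecidableEq p] [Fintype q] [DecidableEq q]
    (AP : Matrix n n ℂ) (BP : Matrix n p ℂ) (CP : Matrix q n ℂ) (DP : Matrix q p ℂ)
    (AK : Matrix k k ℂ) (BK : Matrix k q ℂ) (CK : Matrix p k ℂ) (DK : Matrix p q ℂ) :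
    Matrix (n ⊕ k) (n ⊕ k) ℂ :=
  Matrix.fromBlocks
    (AP + BP * (1 - DK * DP)⁻¹ * DK * CP) (BP * (1 - DK * DP)⁻¹ * CK)
    (BK * (1 - DP * DK)⁻¹ * CP) (AK + BK * DP * (1 - DK * DP)⁻¹ * CK)

/-- A static controller lies in the sparsity pattern with admissible set `Adm`. -/
def InS {p q : Type*} (Adm : Set (p × q)) (K : Matrix p q ℂ) : Prop :=
  ∀ ij, ij ∉ Adm → K ij.1 ij.2 = 0

/-- A dynamic controller lies in the sparsity pattern: entries of its transfer
function `CK (sI - AK)⁻¹ BK + DK` vanish outside `Adm` (for all valid `s`). -/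
def KtfInS {k p q : Type*}
    [Fintype k] [DecidableEq k] [Fintype p] [DecidableEq p] [Fintype q] [DecidableEq q]
    (Adm : Set (p × q)) (AK : Matrix k k ℂ) (BK : Matrix k q ℂ)
    (CK : Matrix p k ℂ) (DK : Matrix p q ℂ) : Prop :=
  ∀ ij, ij ∉ Adm → ∀ s : ℂ, IsUnit (s • (1 : Matrix k k ℂ) - AK) →
    (CK * (s • (1 : Matrix k k ℂ) - AK)⁻¹ * BK + DK) ij.1 ij.2 = 0

/-- Fixed modes of the plant with respect to static controllers in the pattern. -/
noncomputable def FMstat {n p q : Type*}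
    [Fintype n] [DecidableEq n] [Fintype p] [DecidableEq p] [Fintype q] [DecidableEq q]
    (AP : Matrix n n ℂ) (BP : Matrix n p ℂ) (CP : Matrix q n ℂ) (DP : Matrix q p ℂ)
    (Adm : Set (p × q)) : Set ℂ :=
  {lam | ∀ DK : Matrix p q ℂ, InS Adm DK → IsUnit (1 - DK * DP) →
    lam ∈ spectrum ℂ (AclS AP BP CP DP DK)}

/-- Fixed modes of the plant with respect to finite-order dynamic LTI controllers
in the pattern. -/
noncomputable def FMdyn {n p q : Type*}
    [Fintype n] [DecidableEq n] [Fintype p] [DecidableEq p] [Fintype q] [DecidableEq q]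
    (AP : Matrix n n ℂ) (BP : Matrix n p ℂ) (CP : Matrix q n ℂ) (DP : Matrix q p ℂ)
    (Adm : Set (p × q)) : Set ℂ :=
  {lam | ∀ (k : ℕ) (AK : Matrix (Fin k) (Fin k) ℂ) (BK : Matrix (Fin k) q ℂ)
      (CK : Matrix p (Fin k) ℂ) (DK : Matrix p q ℂ),
    KtfInS Adm AK BK CK DK → IsUnit (1 - DK * DP) →
    lam ∈ spectrum ℂ (AclD AP BP CP DP AK BK CK DK)}



section Aux
variable {m k p q : Type*} [Fintype m] [DecidableEq m] [Fintype k] [DecidableEq k]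
  [Fintype p] [DecidableEq p] [Fintype q] [DecidableEq q]

lemma det_one_sub_comm (M : Matrix p q ℂ) (N : Matrix q p ℂ) :
    (1 - M * N).det = (1 - N * M).det := by
  have h1 : (1 : Matrix p p ℂ) - M * N = 1 + M * (-N) := by
    rw [Matrix.mul_neg, ← sub_eq_add_neg]
  have h2 : (1 : Matrix q q ℂ) - N * M = 1 + (-N) * M := by
    rw [Matrix.neg_mul, ← sub_eq_add_neg]
  rw [h1, h2, Matrix.det_one_add_mul_comm]

lemma pushthrough (M : Matrix p q ℂ) (N : Matrix q p ℂ) (h : IsUnit (1 - M * N)) :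
    (1 - M * N)⁻¹ * M = M * (1 - N * M)⁻¹ := by
  have hd1 : IsUnit (1 - M * N).det := (Matrix.isUnit_iff_isUnit_det _).1 h
  have hd2 : IsUnit (1 - N * M).det := by rw [← det_one_sub_comm]; exact hd1
  have hcomm : M * (1 - N * M) = (1 - M * N) * M := by
    rw [Matrix.mul_sub, Matrix.sub_mul, Matrix.mul_one, Matrix.one_mul, Matrix.mul_assoc]
  calc (1 - M * N)⁻¹ * M
      = (1 - M * N)⁻¹ * (M * (1 - N * M)) * (1 - N * M)⁻¹ := by
        rw [Matrix.mul_assoc ((1 - M * N)⁻¹), Matrix.mul_assoc M,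
          Matrix.mul_nonsing_inv _ hd2, Matrix.mul_one]
    _ = (1 - M * N)⁻¹ * ((1 - M * N) * M) * (1 - N * M)⁻¹ := by rw [hcomm]
    _ = M * (1 - N * M)⁻¹ := by
        rw [← Matrix.mul_assoc ((1 - M * N)⁻¹),
          Matrix.nonsing_inv_mul _ hd1, Matrix.one_mul]


lemma det_blk_static (lam : ℂ) (A : Matrix m m ℂ) (B : Matrix m p ℂ) (C : Matrix q m ℂ)
    (DP : Matrix q p ℂ) (M : Matrix p q ℂ) (h : IsUnit (1 - M * DP)) :
    (fromBlocks (lam • 1 - A) (-(B * M)) (-C) (1 - DP * M)).det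
      = (1 - DP * M).det * (lam • (1 : Matrix m m ℂ) - AclS A B C DP M).det := by
  have hd : IsUnit (1 - DP * M).det := by
    rw [← det_one_sub_comm]; exact (Matrix.isUnit_iff_isUnit_det _).1 h
  haveI : Invertible (1 - DP * M) := (1 - DP * M).invertibleOfIsUnitDet hd
  rw [Matrix.det_fromBlocks₂₂]
  congr 1
  rw [Matrix.invOf_eq_nonsing_inv]
  have hpt : M * (1 - DP * M)⁻¹ = (1 - M * DP)⁻¹ * M := (pushthrough M DP h).symm
  have e1 : -(B * M) * (1 - DP * M)⁻¹ * -C = B * (1 - M * DP)⁻¹ * M * C := by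
    rw [Matrix.neg_mul, Matrix.neg_mul, Matrix.mul_neg, neg_neg,
      Matrix.mul_assoc B M, hpt, ← Matrix.mul_assoc B]
  rw [e1]
  unfold AclS
  abel


lemma fromBlocks_sub (A A' : Matrix m m ℂ) (B B' : Matrix m k ℂ) (C C' : Matrix k m ℂ)
    (D D' : Matrix k k ℂ) :
    fromBlocks A B C D - fromBlocks A' B' C' D'
      = fromBlocks (A - A') (B - B') (C - C') (D - D') := by
  ext i j
  rcases i with i | i <;> rcases j with j | j <;>
    simp [Matrix.sub_apply]

def eqv1 (m k β : Type*) : k ⊕ (m ⊕ β) ≃ (m ⊕ k) ⊕ β where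
  toFun x := match x with
    | .inl a => .inl (.inr a)
    | .inr (.inl a) => .inl (.inl a)
    | .inr (.inr a) => .inr a
  invFun x := match x with
    | .inl (.inl a) => .inr (.inl a)
    | .inl (.inr a) => .inl a
    | .inr a => .inr (.inr a)
  left_inv := by rintro (a | a | a) <;> rfl
  right_inv := by rintro ((a | a) | a) <;> rfl

def eqv2 (m p q : Type*) : p ⊕ (m ⊕ q) ≃ m ⊕ (p ⊕ q) where
  toFun x := match x with
    | .inl a => .inr (.inl a)
    | .inr (.inl a) => .inl a
    | .inr (.inr a) => .inr (.inr a)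
  invFun x := match x with
    | .inl a => .inr (.inl a)
    | .inr (.inl a) => .inl a
    | .inr (.inr a) => .inr (.inr a)
  left_inv := by rintro (a | a | a) <;> rfl
  right_inv := by rintro (a | a | a) <;> rfl


set_option maxHeartbeats 1000000 in
lemma key (lam : ℂ) (A : Matrix m m ℂ) (B : Matrix m p ℂ) (C : Matrix q m ℂ) (DP : Matrix q p ℂ)
    (AK : Matrix k k ℂ) (BK : Matrix k q ℂ) (CK : Matrix p k ℂ) (DK : Matrix p q ℂ)
    (hAK : IsUnit (lam • (1 : Matrix k k ℂ) - AK)) (hX : IsUnit (1 - DK * DP)) :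
    (lam • (1 : Matrix (m ⊕ k) (m ⊕ k) ℂ) -
        fromBlocks (A + B * (1 - DK * DP)⁻¹ * DK * C) (B * (1 - DK * DP)⁻¹ * CK)
          (BK * (1 - DP * DK)⁻¹ * C) (AK + BK * DP * (1 - DK * DP)⁻¹ * CK)).det
        * (1 - DK * DP).det
      = (lam • (1 : Matrix k k ℂ) - AK).det *
        (fromBlocks (lam • 1 - A)
          (-(B * (CK * (lam • (1 : Matrix k k ℂ) - AK)⁻¹ * BK + DK)))
          (-C) (1 - DP * (CK * (lam • (1 : Matrix k k ℂ) - AK)⁻¹ * BK + DK))).det := by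
  have hXdet : IsUnit (1 - DK * DP).det := (Matrix.isUnit_iff_isUnit_det _).1 hX
  have hYdet : IsUnit (1 - DP * DK).det := by rw [det_one_sub_comm]; exact hXdet
  have hWdet : IsUnit (lam • (1 : Matrix k k ℂ) - AK).det :=
    (Matrix.isUnit_iff_isUnit_det _).1 hAK
  have hpt : (1 - DK * DP)⁻¹ * DK = DK * (1 - DP * DK)⁻¹ := pushthrough DK DP hX
  set W : Matrix k k ℂ := lam • 1 - AK with hWdef
  set Db : Matrix p q ℂ := CK * W⁻¹ * BK + DK with hDb
  set Wb : Matrix (p ⊕ q) (p ⊕ q) ℂ := fromBlocks 1 (-DK) (-DP) 1 with hWb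
  set S : Matrix (m ⊕ k) (m ⊕ k) ℂ := fromBlocks (lam • 1 - A) 0 0 W with hS
  set U : Matrix (m ⊕ k) (p ⊕ q) ℂ := fromBlocks (-B) 0 0 (-BK) with hU
  set V : Matrix (p ⊕ q) (m ⊕ k) ℂ := fromBlocks 0 (-CK) (-C) 0 with hV
  set E : Matrix ((m ⊕ k) ⊕ (p ⊕ q)) ((m ⊕ k) ⊕ (p ⊕ q)) ℂ := fromBlocks S U V Wb with hE
  have hWbdet : Wb.det = (1 - DP * DK).det := by
    rw [hWb, Matrix.det_fromBlocks_one₁₁]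
    congr 1
    rw [Matrix.neg_mul, Matrix.mul_neg, neg_neg]
  haveI : Invertible Wb := Wb.invertibleOfIsUnitDet (by rw [hWbdet]; exact hYdet)
  set Winv : Matrix (p ⊕ q) (p ⊕ q) ℂ :=
    fromBlocks (1 - DK * DP)⁻¹ ((1 - DK * DP)⁻¹ * DK)
      (DP * (1 - DK * DP)⁻¹) (1 - DP * DK)⁻¹ with hWinv
  have hWbinv : Wb⁻¹ = Winv := by
    apply Matrix.inv_eq_right_inv
    rw [hWb, hWinv, Matrix.fromBlocks_multiply, ← Matrix.fromBlocks_one]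
    have b11 : (1 : Matrix p p ℂ) * (1 - DK * DP)⁻¹ + (-DK) * (DP * (1 - DK * DP)⁻¹)
        = (1 : Matrix p p ℂ) := by
      have h' : (1 : Matrix p p ℂ) * (1 - DK * DP)⁻¹ + (-DK) * (DP * (1 - DK * DP)⁻¹)
          = (1 - DK * DP) * (1 - DK * DP)⁻¹ := by
        rw [Matrix.sub_mul, Matrix.one_mul, Matrix.neg_mul, Matrix.mul_assoc]; abel
      rw [h', Matrix.mul_nonsing_inv _ hXdet]
    have b12 : (1 : Matrix p p ℂ) * ((1 - DK * DP)⁻¹ * DK) + (-DK) * (1 - DP * DK)⁻¹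
        = (0 : Matrix p q ℂ) := by
      rw [Matrix.one_mul, hpt, Matrix.neg_mul, add_neg_cancel]
    have b21 : (-DP) * (1 - DK * DP)⁻¹ + (1 : Matrix q q ℂ) * (DP * (1 - DK * DP)⁻¹)
        = (0 : Matrix q p ℂ) := by
      rw [Matrix.one_mul, Matrix.neg_mul, neg_add_cancel]
    have b22 : (-DP) * ((1 - DK * DP)⁻¹ * DK) + (1 : Matrix q q ℂ) * (1 - DP * DK)⁻¹
        = (1 : Matrix q q ℂ) := by
      rw [hpt, Matrix.one_mul]
      have h' : (-DP) * (DK * (1 - DP * DK)⁻¹) + (1 - DP * DK)⁻¹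
          = (1 - DP * DK) * (1 - DP * DK)⁻¹ := by
        rw [Matrix.sub_mul, Matrix.one_mul, Matrix.neg_mul, Matrix.mul_assoc]; abel
      rw [h', Matrix.mul_nonsing_inv _ hYdet]
    rw [b11, b12, b21, b22]
  have hEdet1 : E.det = (1 - DK * DP).det *
      (lam • (1 : Matrix (m ⊕ k) (m ⊕ k) ℂ) -
        fromBlocks (A + B * (1 - DK * DP)⁻¹ * DK * C) (B * (1 - DK * DP)⁻¹ * CK)
          (BK * (1 - DP * DK)⁻¹ * C) (AK + BK * DP * (1 - DK * DP)⁻¹ * CK)).det := by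
    rw [hE, Matrix.det_fromBlocks₂₂, Matrix.invOf_eq_nonsing_inv, hWbinv, hWbdet,
      det_one_sub_comm DP DK]
    congr 2
    rw [hU, hWinv, hV, Matrix.fromBlocks_multiply, Matrix.fromBlocks_multiply, hS]
    have hone : (lam • (1 : Matrix (m ⊕ k) (m ⊕ k) ℂ))
        = fromBlocks (lam • 1) 0 0 (lam • 1) := by
      rw [← Matrix.fromBlocks_one, Matrix.fromBlocks_smul, smul_zero, smul_zero]
    rw [hone, fromBlocks_sub, fromBlocks_sub, hWdef]
    rw [Matrix.fromBlocks_inj]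
    refine ⟨?_, ?_, ?_, ?_⟩ <;>
      · simp only [Matrix.zero_mul, Matrix.mul_zero, add_zero, zero_add, Matrix.neg_mul,
          Matrix.mul_neg, neg_neg, Matrix.mul_assoc]
        try abel
  -- Step B : reindex
  set Ur : Matrix k (m ⊕ (p ⊕ q)) ℂ := fromCols 0 (fromCols 0 (-BK)) with hUr
  set Vc : Matrix (m ⊕ (p ⊕ q)) k ℂ := fromRows 0 (fromRows (-CK) 0) with hVc
  set Wg : Matrix (m ⊕ (p ⊕ q)) (m ⊕ (p ⊕ q)) ℂ :=
    fromBlocks (lam • 1 - A) (fromCols (-B) 0) (fromRows 0 (-C)) Wb with hWg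
  set F : Matrix (k ⊕ (m ⊕ (p ⊕ q))) (k ⊕ (m ⊕ (p ⊕ q))) ℂ :=
    fromBlocks W Ur Vc Wg with hF
  have hFE : F = E.submatrix (eqv1 m k (p ⊕ q)) (eqv1 m k (p ⊕ q)) := by
    rw [hF, hE, hS, hU, hV, hWb, hUr, hVc, hWg]
    ext i j
    rcases i with a | (a | (a | a)) <;> rcases j with b | (b | (b | b)) <;> rfl
  have hdetFE : F.det = E.det := by
    rw [hFE, Matrix.det_submatrix_equiv_self]
  -- Step C : Schur on the W block
  haveI : Invertible W := W.invertibleOfIsUnitDet hWdet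
  have hFdet : F.det = W.det * (Wg - Vc * W⁻¹ * Ur).det := by
    rw [hF, Matrix.det_fromBlocks₁₁, Matrix.invOf_eq_nonsing_inv]
  have hVWU : Vc * W⁻¹ * Ur
      = fromBlocks 0 0 0 (fromBlocks 0 (CK * W⁻¹ * BK) 0 0) := by
    have h1 : Vc * W⁻¹ = fromRows 0 (fromRows (-(CK * W⁻¹)) 0) := by
      rw [hVc, Matrix.fromRows_mul, Matrix.fromRows_mul, Matrix.zero_mul, Matrix.zero_mul,
        Matrix.neg_mul]
    rw [h1, hUr, Matrix.fromRows_mul_fromCols, Matrix.fromRows_mul_fromCols]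
    simp [Matrix.zero_mul, Matrix.mul_zero, Matrix.neg_mul, Matrix.mul_neg]
  have hWgsub : Wg - Vc * W⁻¹ * Ur
      = fromBlocks (lam • 1 - A) (fromCols (-B) 0) (fromRows 0 (-C))
          (fromBlocks 1 (-Db) (-DP) 1) := by
    rw [hVWU, hWg, fromBlocks_sub, hWb, fromBlocks_sub]
    rw [Matrix.fromBlocks_inj]
    refine ⟨by rw [sub_zero], by rw [sub_zero], by rw [sub_zero], ?_⟩
    rw [Matrix.fromBlocks_inj]
    refine ⟨by rw [sub_zero], ?_, by rw [sub_zero], by rw [sub_zero]⟩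
    rw [hDb]
    abel
  -- Step D : eliminate the input variable
  set Ep : Matrix (m ⊕ (p ⊕ q)) (m ⊕ (p ⊕ q)) ℂ :=
    fromBlocks (lam • 1 - A) (fromCols (-B) 0) (fromRows 0 (-C))
      (fromBlocks 1 (-Db) (-DP) 1) with hEp
  set G : Matrix (p ⊕ (m ⊕ q)) (p ⊕ (m ⊕ q)) ℂ :=
    fromBlocks 1 (fromCols 0 (-Db)) (fromRows (-B) (-DP))
      (fromBlocks (lam • 1 - A) 0 (-C) 1) with hG
  have hGE : G = Ep.submatrix (eqv2 m p q) (eqv2 m p q) := by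
    rw [hG, hEp]
    ext i j
    rcases i with a | (a | a) <;> rcases j with b | (b | b) <;> rfl
  have hdetGE : G.det = Ep.det := by
    rw [hGE, Matrix.det_submatrix_equiv_self]
  have hGdet : G.det
      = (fromBlocks (lam • 1 - A) (-(B * Db)) (-C) (1 - DP * Db)).det := by
    rw [hG, Matrix.det_fromBlocks_one₁₁]
    congr 1
    rw [Matrix.fromRows_mul_fromCols, fromBlocks_sub,
      Matrix.mul_zero, Matrix.mul_zero, Matrix.neg_mul, Matrix.mul_neg, neg_neg,
      Matrix.neg_mul, Matrix.mul_neg, neg_neg]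
    rw [Matrix.fromBlocks_inj]
    exact ⟨by rw [sub_zero], by rw [zero_sub], by rw [sub_zero], rfl⟩
  -- combine
  calc (lam • (1 : Matrix (m ⊕ k) (m ⊕ k) ℂ) -
        fromBlocks (A + B * (1 - DK * DP)⁻¹ * DK * C) (B * (1 - DK * DP)⁻¹ * CK)
          (BK * (1 - DP * DK)⁻¹ * C) (AK + BK * DP * (1 - DK * DP)⁻¹ * CK)).det
        * (1 - DK * DP).det = E.det := by rw [hEdet1, mul_comm]
    _ = F.det := hdetFE.symm
    _ = W.det * (Wg - Vc * W⁻¹ * Ur).det := hFdet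
    _ = W.det * Ep.det := by rw [hWgsub]
    _ = W.det * G.det := by rw [hdetGE]
    _ = W.det * (fromBlocks (lam • 1 - A) (-(B * Db)) (-C) (1 - DP * Db)).det := by
        rw [hGdet]



end Aux

lemma exists_common_nonroot (p q : Polynomial ℂ) (hp : p ≠ 0) (hq : q ≠ 0) :
    ∃ x, p.eval x ≠ 0 ∧ q.eval x ≠ 0 := by
  have hpq : p * q ≠ 0 := mul_ne_zero hp hq
  by_contra h
  push_neg at h
  apply hpq
  apply Polynomial.zero_of_eval_zero
  intro x
  rw [Polynomial.eval_mul]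
  rcases em (p.eval x = 0) with h1 | h1
  · rw [h1, zero_mul]
  · rw [h x h1, mul_zero]

/-- For any plant and any sparsity pattern, the fixed modes with respect to static
controllers equal the fixed modes with respect to finite-order dynamic LTI
controllers. -/
theorem stmt_9 {n nu ny : ℕ}
    (AP : Matrix (Fin n) (Fin n) ℂ) (BP : Matrix (Fin n) (Fin nu) ℂ)
    (CP : Matrix (Fin ny) (Fin n) ℂ) (DP : Matrix (Fin ny) (Fin nu) ℂ)
    (Adm : Set (Fin nu × Fin ny)) :
    FMstat AP BP CP DP Adm = FMdyn AP BP CP DP Adm := by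
  classical
  apply Set.eq_of_subset_of_subset
  · -- static fixed modes are dynamic fixed modes (hard direction)
    intro lam hlam
    intro k AK BK CK DK hKtf hU
    rw [spectrum.mem_iff, Algebra.algebraMap_eq_smul_one]
    intro hA
    have hXdet : IsUnit (1 - DK * DP).det := (Matrix.isUnit_iff_isUnit_det _).1 hU
    -- Step 1: choose a shift t of AK making both lam•1 - (AK + t•1) and the shifted
    -- closed loop invertible.
    set Q : Matrix (Fin n ⊕ Fin k) (Fin n ⊕ Fin k) (Polynomial ℂ) :=
      (lam • 1 - AclD AP BP CP DP AK BK CK DK).map Polynomial.C -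
        ((Polynomial.X : Polynomial ℂ) • (fromBlocks (0 : Matrix (Fin n) (Fin n) (Polynomial ℂ))
          (0 : Matrix (Fin n) (Fin k) (Polynomial ℂ))
          (0 : Matrix (Fin k) (Fin n) (Polynomial ℂ))
          (1 : Matrix (Fin k) (Fin k) (Polynomial ℂ))) :
            Matrix (Fin n ⊕ Fin k) (Fin n ⊕ Fin k) (Polynomial ℂ)) with hQ
    have hQeval : ∀ t : ℂ, (Q.det).eval t =
        (lam • 1 - AclD AP BP CP DP (AK + t • 1) BK CK DK).det := by
      intro t
      have h1 : (Q.map (Polynomial.evalRingHom t)).det = (Q.det).eval t :=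
        (RingHom.map_det (Polynomial.evalRingHom t) Q).symm
      rw [← h1]
      congr 1
      have hAclDt : AclD AP BP CP DP (AK + t • 1) BK CK DK
          = AclD AP BP CP DP AK BK CK DK + fromBlocks 0 0 0 (t • 1) := by
        unfold AclD
        rw [Matrix.fromBlocks_add, Matrix.fromBlocks_inj]
        exact ⟨by rw [add_zero], by rw [add_zero], by rw [add_zero], by abel⟩
      rw [hAclDt]
      ext i j
      rcases i with i | i <;> rcases j with j | j <;>
        simp [hQ, Matrix.sub_apply, Matrix.add_apply, Matrix.map_apply, Matrix.smul_apply,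
          smul_eq_mul, Matrix.one_apply, apply_ite (Polynomial.eval t), sub_sub]
    have hQne : Q.det ≠ 0 := by
      intro h0
      have h1 := hQeval 0
      rw [h0] at h1
      simp only [Polynomial.eval_zero] at h1
      rw [zero_smul, add_zero] at h1
      have hdet : IsUnit (lam • 1 - AclD AP BP CP DP AK BK CK DK).det :=
        (Matrix.isUnit_iff_isUnit_det _).1 hA
      rw [← h1] at hdet
      exact hdet.ne_zero rfl
    have hinj : Function.Injective (fun t : ℂ => lam - t) := by
      intro a b hab
      exact sub_right_inj.mp hab
    have hS1 : ((fun t : ℂ => lam - t) ⁻¹' (spectrum ℂ AK)).Finite :=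
      (Matrix.finite_spectrum AK).preimage hinj.injOn
    have hS2 : {t : ℂ | (Q.det).IsRoot t}.Finite := Polynomial.finite_setOf_isRoot hQne
    obtain ⟨t, ht⟩ := ((hS1.union hS2).infinite_compl).nonempty
    rw [Set.mem_compl_iff, Set.mem_union, not_or] at ht
    obtain ⟨ht1, ht2⟩ := ht
    have hshift : lam • (1 : Matrix (Fin k) (Fin k) ℂ) - (AK + t • 1)
        = (lam - t) • 1 - AK := by
      rw [sub_smul]
      abel
    have hAKt : IsUnit (lam • (1 : Matrix (Fin k) (Fin k) ℂ) - (AK + t • 1)) := by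
      rw [hshift]
      have hns : (lam - t) ∉ spectrum ℂ AK := by
        intro hmem
        exact ht1 (by simpa [Set.mem_preimage] using hmem)
      rw [← Algebra.algebraMap_eq_smul_one]
      exact spectrum.notMem_iff.mp hns
    have hAclDt : IsUnit (lam • 1 - AclD AP BP CP DP (AK + t • 1) BK CK DK) := by
      rw [Matrix.isUnit_iff_isUnit_det, ← hQeval t]
      exact isUnit_iff_ne_zero.mpr ht2
    -- Step 2: the determinant identity
    set Db : Matrix (Fin nu) (Fin ny) ℂ :=
      CK * (lam • (1 : Matrix (Fin k) (Fin k) ℂ) - (AK + t • 1))⁻¹ * BK + DK with hDbdef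
    have hkey : (lam • 1 - AclD AP BP CP DP (AK + t • 1) BK CK DK).det * (1 - DK * DP).det
        = (lam • (1 : Matrix (Fin k) (Fin k) ℂ) - (AK + t • 1)).det *
          (fromBlocks (lam • 1 - AP) (-(BP * Db)) (-CP) (1 - DP * Db)).det :=
      key lam AP BP CP DP (AK + t • 1) BK CK DK hAKt hU
    have hE2ne : (fromBlocks (lam • 1 - AP) (-(BP * Db)) (-CP) (1 - DP * Db)).det ≠ 0 := by
      intro h0
      rw [h0, mul_zero] at hkey
      have hne : (lam • 1 - AclD AP BP CP DP (AK + t • 1) BK CK DK).det *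
          (1 - DK * DP).det ≠ 0 :=
        mul_ne_zero ((Matrix.isUnit_iff_isUnit_det _).1 hAclDt).ne_zero hXdet.ne_zero
      exact hne hkey
    have hDbS : InS Adm Db := by
      intro ij hij
      have h := hKtf ij hij (lam - t) (by rw [← hshift]; exact hAKt)
      rw [← hshift] at h
      exact h
    -- Step 3: scale the static controller to restore well-posedness
    set R1 : Matrix (Fin n ⊕ Fin ny) (Fin n ⊕ Fin ny) (Polynomial ℂ) :=
      fromBlocks ((lam • 1 - AP).map Polynomial.C)
        ((Polynomial.X : Polynomial ℂ) • ((-(BP * Db)).map Polynomial.C))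
        ((-CP).map Polynomial.C)
        (1 + (Polynomial.X : Polynomial ℂ) • ((-(DP * Db)).map Polynomial.C)) with hR1
    have hR1eval : ∀ e : ℂ, (R1.det).eval e =
        (fromBlocks (lam • 1 - AP) (-(BP * (e • Db))) (-CP) (1 - DP * (e • Db))).det := by
      intro e
      have h1 : (R1.map (Polynomial.evalRingHom e)).det = (R1.det).eval e :=
        (RingHom.map_det (Polynomial.evalRingHom e) R1).symm
      rw [← h1]
      congr 1
      have hm1 : BP * (e • Db) = e • (BP * Db) := Matrix.mul_smul BP e Db
      have hm2 : DP * (e • Db) = e • (DP * Db) := Matrix.mul_smul DP e Db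
      rw [hm1, hm2]
      ext i j
      rcases i with i | i <;> rcases j with j | j <;>
        simp [hR1, Matrix.map_apply, Matrix.smul_apply, Matrix.add_apply, Matrix.sub_apply,
          Matrix.neg_apply, smul_eq_mul, Matrix.one_apply, apply_ite (Polynomial.eval e),
          sub_eq_add_neg, mul_neg, mul_comm e]
    have hr1ne : R1.det ≠ 0 := by
      intro h0
      have h1 := hR1eval 1
      rw [h0] at h1
      simp only [Polynomial.eval_zero] at h1
      rw [one_smul] at h1
      exact hE2ne h1.symm
    set R2 : Matrix (Fin nu) (Fin nu) (Polynomial ℂ) :=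
      1 + (Polynomial.X : Polynomial ℂ) • ((-(Db * DP)).map Polynomial.C) with hR2
    have hR2eval : ∀ e : ℂ, (R2.det).eval e = (1 - (e • Db) * DP).det := by
      intro e
      have h1 : (R2.map (Polynomial.evalRingHom e)).det = (R2.det).eval e :=
        (RingHom.map_det (Polynomial.evalRingHom e) R2).symm
      rw [← h1]
      congr 1
      have hm1 : (e • Db) * DP = e • (Db * DP) := Matrix.smul_mul e Db DP
      rw [hm1]
      ext i j
      simp [hR2, Matrix.map_apply, Matrix.smul_apply, Matrix.add_apply, Matrix.sub_apply,
        Matrix.neg_apply, Matrix.one_apply, smul_eq_mul, apply_ite (Polynomial.eval e),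
        sub_eq_add_neg, mul_neg, mul_comm e]
    have hr2ne : R2.det ≠ 0 := by
      intro h0
      have h1 := hR2eval 0
      rw [h0] at h1
      simp only [Polynomial.eval_zero] at h1
      rw [zero_smul, Matrix.zero_mul, sub_zero, Matrix.det_one] at h1
      exact one_ne_zero h1.symm
    obtain ⟨e, he1, he2⟩ := exists_common_nonroot R1.det R2.det hr1ne hr2ne
    have hUe : IsUnit (1 - (e • Db) * DP) :=
      (Matrix.isUnit_iff_isUnit_det _).2 (isUnit_iff_ne_zero.2 (by rw [← hR2eval]; exact he2))
    have hInSe : InS Adm (e • Db) := by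
      intro ij hij
      have := hDbS ij hij
      simp [Matrix.smul_apply, this]
    have hspec := hlam (e • Db) hInSe hUe
    rw [spectrum.mem_iff, Algebra.algebraMap_eq_smul_one] at hspec
    have hdet0 : (lam • 1 - AclS AP BP CP DP (e • Db)).det = 0 := by
      by_contra hne
      exact hspec ((Matrix.isUnit_iff_isUnit_det _).2 (isUnit_iff_ne_zero.2 hne))
    have hblk := det_blk_static lam AP BP CP DP (e • Db) hUe
    rw [hdet0, mul_zero] at hblk
    have : (R1.det).eval e = 0 := by rw [hR1eval e, hblk]
    exact he1 this
  · -- dynamic fixed modes are static fixed modes (take the zero-order controller)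
    intro lam hlam
    intro DK hInS hU
    have hKtf : KtfInS Adm (0 : Matrix (Fin 0) (Fin 0) ℂ) (0 : Matrix (Fin 0) (Fin ny) ℂ)
        (0 : Matrix (Fin nu) (Fin 0) ℂ) DK := by
      intro ij hij s hs
      simpa using hInS ij hij
    have hsp := hlam 0 0 0 0 DK hKtf hU
    rw [spectrum.mem_iff, Algebra.algebraMap_eq_smul_one] at hsp ⊢
    intro hcon
    apply hsp
    have hsub : (lam • 1 - AclD AP BP CP DP (0 : Matrix (Fin 0) (Fin 0) ℂ) 0 0 DK)
        = (lam • 1 - AclS AP BP CP DP DK).submatrix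
            (Equiv.sumEmpty (Fin n) (Fin 0)) (Equiv.sumEmpty (Fin n) (Fin 0)) := by
      ext i j
      rcases i with i | i
      · rcases j with j | j
        · simp [AclD, AclS, Matrix.sub_apply, Matrix.smul_apply, Matrix.one_apply]
        · exact j.elim0
      · exact i.elim0
    rw [Matrix.isUnit_iff_isUnit_det, hsub, Matrix.det_submatrix_equiv_self,
      ← Matrix.isUnit_iff_isUnit_det]
    exact hcon
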